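/- The splitting iteration with splitting operator P converges for every initial error if and only if ρ(Z) < 1: the matrix powers T^k of the error iteration matrix T := I_{n+m} − P⁻¹·K converge to the zero matrix as k → ∞ (equivalently, T^k·e → 0 for every e ∈ ℂ^{n+m}) if and only if the spectral radius of Z := Ξ·A⁻¹·Bᵀ·H_p⁻¹ is strictly less than 1. -/

import Mathlib

open Matrix Filter
open scoped NNReal ENNReal

section Key

attribute [local instance] Matrix.linftyOpNormedAddCommGroup Matrix.linftyOpNormedRing
  Matrix.linftyOpNormedAlgebra

variable {m : ℕ}

lemma aux_entry_nnnorm_le (M : Matrix (Fin m) (Fin m) ℂ) (i j : Fin m) : ‖M i j‖₊ ≤ ‖M‖₊ := by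
  rw [Matrix.linfty_opNNNorm_def]
  exact le_trans
    (Finset.single_le_sum (f := fun j => ‖M i j‖₊) (fun _ _ => zero_le) (Finset.mem_univ j))
    (Finset.le_sup (f := fun i => ∑ j : Fin m, ‖M i j‖₊) (Finset.mem_univ i))

lemma aux_nnnorm_le_sum (M : Matrix (Fin m) (Fin m) ℂ) : ‖M‖₊ ≤ ∑ i, ∑ j, ‖M i j‖₊ := by
  rw [Matrix.linfty_opNNNorm_def]
  exact Finset.sup_le fun i _ =>
    Finset.single_le_sum (f := fun i => ∑ j, ‖M i j‖₊) (fun _ _ => zero_le) (Finset.mem_univ i)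

lemma aux_tendsto_entries_iff_norm (f : ℕ → Matrix (Fin m) (Fin m) ℂ) :
    (∀ i j, Tendsto (fun k => f k i j) atTop (nhds (0 : ℂ))) ↔
      Tendsto (fun k => ‖f k‖) atTop (nhds (0 : ℝ)) := by
  constructor
  · intro h
    have hsum : Tendsto (fun k => ∑ i : Fin m, ∑ j : Fin m, ‖f k i j‖) atTop (nhds 0) := by
      have := tendsto_finset_sum (Finset.univ : Finset (Fin m)) (fun i _ =>
        tendsto_finset_sum (Finset.univ : Finset (Fin m)) (fun j _ => (h i j).norm))
      simpa using this
    refine squeeze_zero (fun k => norm_nonneg _) (fun k => ?_) hsum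
    have := aux_nnnorm_le_sum (f k)
    calc ‖f k‖ = ((‖f k‖₊ : ℝ≥0) : ℝ) := rfl
      _ ≤ ((∑ i, ∑ j, ‖f k i j‖₊ : ℝ≥0) : ℝ) := by exact_mod_cast this
      _ = ∑ i, ∑ j, ‖f k i j‖ := by push_cast; rfl
  · intro h i j
    rw [tendsto_zero_iff_norm_tendsto_zero]
    refine squeeze_zero (fun k => norm_nonneg _) (fun k => ?_) h
    have := aux_entry_nnnorm_le (f k) i j
    exact_mod_cast this


lemma aux_pow_tendsto_iff (hm : 0 < m) (M : Matrix (Fin m) (Fin m) ℂ) :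
    (∀ i j, Tendsto (fun k => (M ^ k) i j) atTop (nhds (0 : ℂ))) ↔
      sSup ((fun z : ℂ => ‖z‖) '' spectrum ℂ M) < 1 := by
  haveI : Nonempty (Fin m) := ⟨⟨0, hm⟩⟩
  haveI : Nontrivial (Matrix (Fin m) (Fin m) ℂ) := Matrix.nonempty
  haveI : CompleteSpace (Matrix (Fin m) (Fin m) ℂ) :=
    FiniteDimensional.complete ℂ _
  haveI : NormOneClass (Matrix (Fin m) (Fin m) ℂ) := by
    constructor
    rw [← Matrix.diagonal_one, Matrix.linfty_opNorm_diagonal]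
    simp
  have hne : (spectrum ℂ M).Nonempty := spectrum.nonempty M
  have hScpt : IsCompact ((fun z : ℂ => ‖z‖) '' spectrum ℂ M) :=
    (spectrum.isCompact M).image continuous_norm
  rw [aux_tendsto_entries_iff_norm]
  constructor
  · intro h
    have hlt : ∀ lam ∈ spectrum ℂ M, ‖lam‖ < 1 := by
      intro lam hlam
      by_contra hge
      push_neg at hge
      have hpow : ∀ k : ℕ, lam ^ k ∈ spectrum ℂ (M ^ k) := by
        intro k
        have h1 := spectrum.subset_polynomial_aeval M (Polynomial.X ^ k : Polynomial ℂ)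
          ⟨lam, hlam, rfl⟩
        simpa [map_pow] using h1
      have hone : ∀ k : ℕ, (1 : ℝ) ≤ ‖M ^ k‖ := by
        intro k
        refine le_trans ?_ (spectrum.norm_le_norm_of_mem (hpow k))
        rw [norm_pow]
        exact one_le_pow₀ hge
      have := (h.eventually (eventually_lt_nhds one_pos)).exists
      obtain ⟨k, hk⟩ := this
      exact absurd hk (not_lt.mpr (hone k))
    obtain ⟨lam, hlam, heq⟩ := hScpt.sSup_mem (hne.image _)
    rw [← heq]
    exact hlt lam hlam
  · intro hlt
    have hub : ∀ lam ∈ spectrum ℂ M, ‖lam‖₊ < (1 : ℝ≥0) := by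
      intro lam hlam
      have h1 : ‖lam‖ ≤ sSup ((fun z : ℂ => ‖z‖) '' spectrum ℂ M) :=
        le_csSup hScpt.bddAbove ⟨lam, hlam, rfl⟩
      have : ‖lam‖ < 1 := lt_of_le_of_lt h1 hlt
      exact_mod_cast this
    have hrho : spectralRadius ℂ M < 1 := by
      have := spectrum.spectralRadius_lt_of_forall_lt_of_nonempty hne (r := 1) hub
      simpa using this
    obtain ⟨c, hc1, hc2⟩ := exists_between hrho
    lift c to ℝ≥0 using (hc2.trans_le le_top).ne
    have hgel := spectrum.pow_nnnorm_pow_one_div_tendsto_nhds_spectralRadius M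
    have hev : ∀ᶠ k : ℕ in atTop, (‖M ^ k‖₊ : ℝ≥0∞) ^ (1 / (k : ℝ)) < (c : ℝ≥0∞) :=
      hgel.eventually_lt_const hc1
    have hbound : ∀ᶠ k : ℕ in atTop, ‖M ^ k‖ ≤ (c : ℝ) ^ k := by
      filter_upwards [hev, eventually_ge_atTop 1] with k hk hk1
      have hk0 : (k : ℝ) ≠ 0 := by exact_mod_cast Nat.one_le_iff_ne_zero.mp hk1
      have h2 : ((‖M ^ k‖₊ : ℝ≥0∞) ^ (1 / (k : ℝ))) ^ (k : ℝ) ≤ (c : ℝ≥0∞) ^ (k : ℝ) :=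
        ENNReal.rpow_le_rpow hk.le (by positivity)
      rw [← ENNReal.rpow_mul, one_div, inv_mul_cancel₀ hk0, ENNReal.rpow_one] at h2
      rw [ENNReal.rpow_natCast, ← ENNReal.coe_pow, ENNReal.coe_le_coe] at h2
      calc ‖M ^ k‖ = ((‖M ^ k‖₊ : ℝ≥0) : ℝ) := rfl
        _ ≤ ((c ^ k : ℝ≥0) : ℝ) := by exact_mod_cast h2
        _ = (c : ℝ) ^ k := by push_cast; rfl
    have hc2' : (c : ℝ) < 1 := by exact_mod_cast hc2
    have hcpow : Tendsto (fun k : ℕ => (c : ℝ) ^ k) atTop (nhds 0) :=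
      tendsto_pow_atTop_nhds_zero_of_lt_one c.coe_nonneg hc2'
    exact squeeze_zero' (Eventually.of_forall fun k => norm_nonneg _) hbound hcpow

end Key

lemma aux_tendsto_matrix_iff {ι κ : Type*} (f : ℕ → Matrix ι κ ℂ) :
    Tendsto f atTop (nhds 0) ↔
      ∀ i j, Tendsto (fun k => f k i j) atTop (nhds (0 : ℂ)) := by
  constructor
  · intro h i j
    exact tendsto_pi_nhds.mp (tendsto_pi_nhds.mp h i) j
  · intro h
    exact tendsto_pi_nhds.mpr fun i => tendsto_pi_nhds.mpr fun j => h i j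


/-- The splitting iteration with splitting operator `P` converges for
every initial error iff `ρ(Z) < 1`: the powers `T^k` of the error iteration matrix
`T = I − P⁻¹·K` tend to the zero matrix (equivalently, `T^k·e → 0` for every `e`)
iff the spectral radius of `Z = Ξ·A⁻¹·Bᵀ·Hₚ⁻¹` is strictly less than `1`. -/
theorem splitting_convergence_iff (n m : ℕ) (hn : 0 < n) (hm : 0 < m)
    (A : Matrix (Fin n) (Fin n) ℂ) (hA : IsUnit A)
    (B : Matrix (Fin m) (Fin n) ℂ)
    (C Ap : Matrix (Fin m) (Fin m) ℂ)
    (Ξ : Matrix (Fin m) (Fin n) ℂ) (hΞ : Ξ = B * A - Ap * B)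
    (Hp : Matrix (Fin m) (Fin m) ℂ) (hHp : Hp = B * Bᵀ + Ap * C) (hHpu : IsUnit Hp)
    (K : Matrix (Fin n ⊕ Fin m) (Fin n ⊕ Fin m) ℂ) (hK : K = fromBlocks A Bᵀ Ξ Hp)
    (P : Matrix (Fin n ⊕ Fin m) (Fin n ⊕ Fin m) ℂ)
    (hP : P = fromBlocks A Bᵀ (0 : Matrix (Fin m) (Fin n) ℂ) Hp)
    (T : Matrix (Fin n ⊕ Fin m) (Fin n ⊕ Fin m) ℂ) (hT : T = 1 - P⁻¹ * K)
    (Z : Matrix (Fin m) (Fin m) ℂ) (hZ : Z = Ξ * A⁻¹ * Bᵀ * Hp⁻¹) :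
    (Filter.Tendsto (fun k : ℕ => T ^ k) Filter.atTop
        (nhds (0 : Matrix (Fin n ⊕ Fin m) (Fin n ⊕ Fin m) ℂ)) ↔
      sSup ((fun z : ℂ => ‖z‖) '' spectrum ℂ Z) < 1) ∧
    ((∀ e : Fin n ⊕ Fin m → ℂ,
        Filter.Tendsto (fun k : ℕ => (T ^ k).mulVec e) Filter.atTop
          (nhds (0 : Fin n ⊕ Fin m → ℂ))) ↔
      sSup ((fun z : ℂ => ‖z‖) '' spectrum ℂ Z) < 1) := by
  have hAd : IsUnit A.det := (Matrix.isUnit_iff_isUnit_det A).mp hA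
  have hHd : IsUnit Hp.det := (Matrix.isUnit_iff_isUnit_det Hp).mp hHpu
  set X : Matrix (Fin n) (Fin m) ℂ := A⁻¹ * Bᵀ * Hp⁻¹ with hX
  set W : Matrix (Fin n) (Fin n) ℂ := X * Ξ with hW
  set Y : Matrix (Fin m) (Fin n) ℂ := Hp⁻¹ * Ξ with hY
  have hZX : Z = Ξ * X := by rw [hZ, hX]; simp only [Matrix.mul_assoc]
  have hPu : IsUnit P := by
    rw [hP]
    exact Matrix.isUnit_fromBlocks_zero₂₁.mpr ⟨hA, hHpu⟩
  have hPd : IsUnit P.det := (Matrix.isUnit_iff_isUnit_det P).mp hPu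
  -- T in block form
  have hTblocks : T = fromBlocks W 0 (-Y) 0 := by
    have hKP : K = P * fromBlocks (1 - W) 0 Y 1 := by
      rw [hK, hP, Matrix.fromBlocks_multiply]
      have h11 : A * (1 - W) + Bᵀ * Y = A := by
        rw [Matrix.mul_sub, Matrix.mul_one, hW, hX, hY]
        simp only [Matrix.mul_assoc]
        rw [Matrix.mul_nonsing_inv_cancel_left _ _ hAd]
        abel
      have h21 : (0 : Matrix (Fin m) (Fin n) ℂ) * (1 - W) + Hp * Y = Ξ := by
        rw [Matrix.zero_mul, zero_add, hY, Matrix.mul_nonsing_inv_cancel_left _ _ hHd]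
      rw [h11, h21]
      simp
    rw [hT, hKP, ← Matrix.mul_assoc, Matrix.nonsing_inv_mul _ hPd, Matrix.one_mul]
    ext (i | i) (j | j) <;>
      simp [Matrix.fromBlocks, Matrix.sub_apply, Matrix.one_apply, Sum.elim_inl, Sum.elim_inr]
  -- powers of T
  have hTpow : ∀ k : ℕ, T ^ (k + 1) = fromBlocks (W ^ (k + 1)) 0 (-Y * W ^ k) 0 := by
    intro k
    induction k with
    | zero => simp [hTblocks]
    | succ k ih =>
      rw [pow_succ', ih, hTblocks, Matrix.fromBlocks_multiply]
      rw [← pow_succ']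
      simp
  -- convergence transfer T ↔ W
  have eTW : Tendsto (fun k : ℕ => T ^ k) atTop (nhds 0) ↔
      Tendsto (fun k : ℕ => W ^ k) atTop (nhds 0) := by
    constructor
    · intro h
      have h1 : Tendsto (fun k : ℕ => T ^ (k + 1)) atTop (nhds 0) :=
        h.comp (tendsto_add_atTop_nat 1)
      rw [← tendsto_add_atTop_iff_nat 1]
      rw [aux_tendsto_matrix_iff]
      intro i j
      have h2 := (aux_tendsto_matrix_iff _).mp h1 (Sum.inl i) (Sum.inl j)
      simpa [hTpow, Matrix.fromBlocks_apply₁₁] using h2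
    · intro h
      have hc : Continuous (fun N : Matrix (Fin n) (Fin n) ℂ =>
          fromBlocks (W * N) (0 : Matrix (Fin n) (Fin m) ℂ) (-Y * N)
            (0 : Matrix (Fin m) (Fin m) ℂ)) := by
        exact Continuous.matrix_fromBlocks (continuous_const.matrix_mul continuous_id)
          continuous_const (continuous_const.matrix_mul continuous_id) continuous_const
      have h1 : Tendsto (fun k : ℕ => T ^ (k + 1)) atTop (nhds 0) := by
        have h2 := (hc.tendsto 0).comp h
        have h3 : (fun k : ℕ => fromBlocks (W * W ^ k) (0 : Matrix (Fin n) (Fin m) ℂ)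
            (-Y * W ^ k) (0 : Matrix (Fin m) (Fin m) ℂ)) = fun k : ℕ => T ^ (k + 1) := by
          funext k
          rw [hTpow, ← pow_succ']
        rw [← h3]
        simpa [Function.comp_def] using h2
      exact (tendsto_add_atTop_iff_nat 1).mp h1
  -- identities between powers of W and Z
  have hWZ : ∀ k : ℕ, W ^ (k + 1) = X * Z ^ k * Ξ := by
    intro k
    induction k with
    | zero => simp [hW]
    | succ k ih =>
      rw [pow_succ', ih, hW, hZX]
      rw [pow_succ']
      simp only [Matrix.mul_assoc]
  have hZW : ∀ k : ℕ, Z ^ (k + 1) = Ξ * W ^ k * X := by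
    intro k
    induction k with
    | zero => simp [hZX]
    | succ k ih =>
      rw [pow_succ', ih, hW, hZX]
      rw [pow_succ']
      simp only [Matrix.mul_assoc]
  -- convergence transfer W ↔ Z
  have eWZ : Tendsto (fun k : ℕ => W ^ k) atTop (nhds 0) ↔
      Tendsto (fun k : ℕ => Z ^ k) atTop (nhds 0) := by
    constructor
    · intro h
      have hc : Continuous (fun N : Matrix (Fin n) (Fin n) ℂ => Ξ * N * X) :=
        (continuous_const.matrix_mul continuous_id).matrix_mul continuous_const
      have h2 := (hc.tendsto 0).comp h
      have h1 : Tendsto (fun k : ℕ => Z ^ (k + 1)) atTop (nhds 0) := by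
        simp only [Function.comp_def] at h2
        simpa [← hZW, Matrix.zero_mul, Matrix.mul_zero] using h2
      exact (tendsto_add_atTop_iff_nat 1).mp h1
    · intro h
      have hc : Continuous (fun N : Matrix (Fin m) (Fin m) ℂ => X * N * Ξ) :=
        (continuous_const.matrix_mul continuous_id).matrix_mul continuous_const
      have h2 := (hc.tendsto 0).comp h
      have h1 : Tendsto (fun k : ℕ => W ^ (k + 1)) atTop (nhds 0) := by
        simp only [Function.comp_def] at h2
        simpa [← hWZ, Matrix.zero_mul, Matrix.mul_zero] using h2
      exact (tendsto_add_atTop_iff_nat 1).mp h1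
  -- the key spectral equivalence
  have eZ : Tendsto (fun k : ℕ => Z ^ k) atTop (nhds 0) ↔
      sSup ((fun z : ℂ => ‖z‖) '' spectrum ℂ Z) < 1 := by
    rw [aux_tendsto_matrix_iff]
    exact aux_pow_tendsto_iff hm Z
  have main : Tendsto (fun k : ℕ => T ^ k) atTop (nhds 0) ↔
      sSup ((fun z : ℂ => ‖z‖) '' spectrum ℂ Z) < 1 :=
    eTW.trans (eWZ.trans eZ)
  refine ⟨main, ?_⟩
  rw [← main]
  constructor
  · intro h
    rw [aux_tendsto_matrix_iff]
    intro i j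
    have h1 := tendsto_pi_nhds.mp (h (Pi.single j 1)) i
    simpa [Matrix.mulVec_single] using h1
  · intro h e
    rw [tendsto_pi_nhds]
    intro i
    have h1 : ∀ j, Tendsto (fun k : ℕ => (T ^ k) i j * e j) atTop (nhds 0) := by
      intro j
      have := ((aux_tendsto_matrix_iff _).mp h i j).mul_const (e j)
      simpa using this
    have h2 := tendsto_finset_sum Finset.univ (fun j _ => h1 j)
    simpa [Matrix.mulVec, dotProduct] using h2
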